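/- Let f, g, h : ℝ → ℝ be bounded C^{1+σ} functions (0 < σ < 1) with h'(z) = |z|^σ on [-2a, 2a] where a = max(sup|f|, sup|g|), and assume f(c) ≠ g(c) for some c. Define u(t,x) = (f(x₂), 0, h(x₁ - t f(x₂))) and v(t,x) = (g(x₂), 0, h(x₁ - t g(x₂))). Then for every 0 < t ≤ 1, ‖u(t) - v(t)‖_{C^{1+σ}} ≥ 2, even though ‖u(0) - v(0)‖_{C^{1+σ}} = ‖f - g‖_{C^{1+σ}} can be made arbitrarily small. -/

import Mathlib

open Set ContinuousLinearMap

noncomputable def pr3 (i : Fin 3) : (Fin 3 → ℝ) →L[ℝ] ℝ := ContinuousLinearMap.proj i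

lemma shear_hasFDerivAt (f g h : ℝ → ℝ) (hf : Differentiable ℝ f) (hg : Differentiable ℝ g)
    (hh : Differentiable ℝ h) (t : ℝ) (p : Fin 3 → ℝ) :
    HasFDerivAt (fun z : Fin 3 → ℝ =>
        ![f (z 1), (0 : ℝ), h (z 0 - t * f (z 1))] - ![g (z 1), (0 : ℝ), h (z 0 - t * g (z 1))])
      (ContinuousLinearMap.pi
        ![(deriv f (p 1) - deriv g (p 1)) • pr3 1,
          0,
          deriv h (p 0 - t * f (p 1)) • (pr3 0 - (t * deriv f (p 1)) • pr3 1)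
          - deriv h (p 0 - t * g (p 1)) • (pr3 0 - (t * deriv g (p 1)) • pr3 1)]) p := by
  have hp1 : HasFDerivAt (fun z : Fin 3 → ℝ => z 1) (pr3 1) p := (pr3 1).hasFDerivAt
  have hp0 : HasFDerivAt (fun z : Fin 3 → ℝ => z 0) (pr3 0) p := (pr3 0).hasFDerivAt
  have hF : HasFDerivAt (fun z : Fin 3 → ℝ => f (z 1)) (deriv f (p 1) • pr3 1) p :=
    ((hf (p 1)).hasDerivAt).comp_hasFDerivAt p hp1
  have hG : HasFDerivAt (fun z : Fin 3 → ℝ => g (z 1)) (deriv g (p 1) • pr3 1) p :=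
    ((hg (p 1)).hasDerivAt).comp_hasFDerivAt p hp1
  have hwf : HasFDerivAt (fun z : Fin 3 → ℝ => z 0 - t * f (z 1))
      (pr3 0 - (t * deriv f (p 1)) • pr3 1) p := by
    have h2 := (((hf (p 1)).hasDerivAt).const_mul t).comp_hasFDerivAt p hp1
    exact hp0.sub h2
  have hwg : HasFDerivAt (fun z : Fin 3 → ℝ => z 0 - t * g (z 1))
      (pr3 0 - (t * deriv g (p 1)) • pr3 1) p := by
    have h2 := (((hg (p 1)).hasDerivAt).const_mul t).comp_hasFDerivAt p hp1
    exact hp0.sub h2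
  have hHf : HasFDerivAt (fun z : Fin 3 → ℝ => h (z 0 - t * f (z 1)))
      (deriv h (p 0 - t * f (p 1)) • (pr3 0 - (t * deriv f (p 1)) • pr3 1)) p :=
    ((hh _).hasDerivAt).comp_hasFDerivAt p hwf
  have hHg : HasFDerivAt (fun z : Fin 3 → ℝ => h (z 0 - t * g (z 1)))
      (deriv h (p 0 - t * g (p 1)) • (pr3 0 - (t * deriv g (p 1)) • pr3 1)) p :=
    ((hh _).hasDerivAt).comp_hasFDerivAt p hwg
  rw [hasFDerivAt_pi']
  intro i
  fin_cases i
  · simp only [Fin.zero_eta, Fin.mk_one, Pi.sub_apply, Matrix.cons_val_zero, ContinuousLinearMap.proj_pi]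
    have h3 := hF.sub hG
    rwa [← sub_smul] at h3
  · have h0 : HasFDerivAt (fun _ : Fin 3 → ℝ => (0:ℝ)) (0 : (Fin 3 → ℝ) →L[ℝ] ℝ) p :=
      hasFDerivAt_const 0 p
    simpa only [Fin.mk_one, Pi.sub_apply, Matrix.cons_val_one, Matrix.head_cons,
      Matrix.cons_val_zero, ContinuousLinearMap.proj_pi, sub_self] using h0
  · have h2 : (⟨2, by norm_num⟩ : Fin 3) = 2 := rfl
    rw [h2]
    simp only [Pi.sub_apply, Matrix.cons_val_two, Matrix.tail_cons, Matrix.head_cons,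
      ContinuousLinearMap.proj_pi]
    exact hHf.sub hHg


/- STATEMENT 18: shear-flow ill-posedness in C^{1+σ}. Let f, g, h be bounded
C^{1+σ} functions (0 < σ < 1), |f| ≤ a, |g| ≤ a, with h'(z) = |z|^σ on
[-2a, 2a], and f(c) ≠ g(c) for some c. For the shear flows
u(t,x) = (f(x₂), 0, h(x₁ - t f(x₂))), v(t,x) = (g(x₂), 0, h(x₁ - t g(x₂))),
for every 0 < t ≤ 1 one has ‖u(t) - v(t)‖_{C^{1+σ}} ≥ 2: indeed any σ-Hölder
constant K for D(u(t) - v(t)) satisfies 2 ≤ K (while ‖u(0) - v(0)‖_{C^{1+σ}}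
= ‖f - g‖_{C^{1+σ}} can be made arbitrarily small). -/
theorem shear_flow_illposed_C1sigma (σ : ℝ) (hσ0 : 0 < σ) (hσ1 : σ < 1)
    (f g h : ℝ → ℝ) (hf : ContDiff ℝ 1 f) (hg : ContDiff ℝ 1 g) (hh : ContDiff ℝ 1 h)
    (Cf Cg Ch : ℝ)
    (hfH : ∀ x y : ℝ, |deriv f x - deriv f y| ≤ Cf * |x - y| ^ σ)
    (hgH : ∀ x y : ℝ, |deriv g x - deriv g y| ≤ Cg * |x - y| ^ σ)
    (hhH : ∀ x y : ℝ, |deriv h x - deriv h y| ≤ Ch * |x - y| ^ σ)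
    (a : ℝ) (hfa : ∀ x, |f x| ≤ a) (hga : ∀ x, |g x| ≤ a)
    (hh' : ∀ z ∈ Icc (-(2 * a)) (2 * a), deriv h z = |z| ^ σ)
    (c : ℝ) (hc : f c ≠ g c)
    (t : ℝ) (ht0 : 0 < t) (ht1 : t ≤ 1) :
    ∀ K : ℝ,
      (∀ x y : Fin 3 → ℝ, x ≠ y →
        ‖fderiv ℝ
              (fun z : Fin 3 → ℝ =>
                ![f (z 1), (0 : ℝ), h (z 0 - t * f (z 1))] -
                  ![g (z 1), (0 : ℝ), h (z 0 - t * g (z 1))]) x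
            - fderiv ℝ
              (fun z : Fin 3 → ℝ =>
                ![f (z 1), (0 : ℝ), h (z 0 - t * f (z 1))] -
                  ![g (z 1), (0 : ℝ), h (z 0 - t * g (z 1))]) y‖
          ≤ K * ‖x - y‖ ^ σ) →
      2 ≤ K := by
  intro K hK
  have hfd := hf.differentiable one_ne_zero
  have hgd := hg.differentiable one_ne_zero
  have hhd := hh.differentiable one_ne_zero
  set T : ℝ := t * (f c - g c) with hT
  have hTne : T ≠ 0 := mul_ne_zero (ne_of_gt ht0) (sub_ne_zero.mpr hc)
  have hTabs : 0 < |T| := abs_pos.mpr hTne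
  have ha0 : 0 ≤ a := le_trans (abs_nonneg _) (hfa 0)
  have hTle : |T| ≤ 2 * a := by
    have h1 : |f c - g c| ≤ |f c| + |g c| := abs_sub _ _
    have h2 : |f c| + |g c| ≤ 2 * a := by
      have := hfa c; have := hga c; linarith
    calc |T| = t * |f c - g c| := by
          rw [hT, abs_mul, abs_of_pos ht0]
      _ ≤ 1 * (2 * a) := by
          apply mul_le_mul ht1 (h1.trans h2) (abs_nonneg _) zero_le_one
      _ = 2 * a := one_mul _
  have hmemT : T ∈ Icc (-(2*a)) (2*a) := abs_le.mp hTle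
  have hmemnT : -T ∈ Icc (-(2*a)) (2*a) := by
    constructor
    · linarith [hmemT.2]
    · linarith [hmemT.1]
  have hmem0 : (0:ℝ) ∈ Icc (-(2*a)) (2*a) := by constructor <;> linarith
  have hd0 : deriv h 0 = 0 := by
    rw [hh' 0 hmem0, abs_zero, Real.zero_rpow (ne_of_gt hσ0)]
  have hdT : deriv h T = |T| ^ σ := hh' T hmemT
  have hdnT : deriv h (-T) = |T| ^ σ := by rw [hh' (-T) hmemnT, abs_neg]
  set x : Fin 3 → ℝ := ![t * g c, c, 0] with hx
  set y : Fin 3 → ℝ := ![t * f c, c, 0] with hy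
  have hxy : x ≠ y := by
    intro hxyeq
    apply hc
    have h4 := congrFun hxyeq 0
    simp only [hx, hy, Matrix.cons_val_zero] at h4
    exact (mul_left_cancel₀ (ne_of_gt ht0) h4).symm
  set e : Fin 3 → ℝ := ![1, 0, 0] with he
  have hAx := (shear_hasFDerivAt f g h hfd hgd hhd t x).fderiv
  have hAy := (shear_hasFDerivAt f g h hfd hgd hhd t y).fderiv
  set A := fderiv ℝ (fun z : Fin 3 → ℝ =>
      ![f (z 1), (0 : ℝ), h (z 0 - t * f (z 1))] - ![g (z 1), (0 : ℝ), h (z 0 - t * g (z 1))]) x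
  set B := fderiv ℝ (fun z : Fin 3 → ℝ =>
      ![f (z 1), (0 : ℝ), h (z 0 - t * f (z 1))] - ![g (z 1), (0 : ℝ), h (z 0 - t * g (z 1))]) y
  have hx0 : x 0 = t * g c := rfl
  have hx1 : x 1 = c := rfl
  have hy0 : y 0 = t * f c := rfl
  have hy1 : y 1 = c := rfl
  have hAe : (A e) 2 = |T| ^ σ := by
    rw [hAx]
    simp only [ContinuousLinearMap.pi_apply, hx0, hx1, Matrix.cons_val_two, Matrix.tail_cons,
      Matrix.head_cons]
    have harg1 : t * g c - t * f c = -T := by rw [hT]; ring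
    have harg2 : t * g c - t * g c = (0:ℝ) := by ring
    rw [harg1, harg2, hdnT, hd0]
    simp [pr3, he]
  have hBe : (B e) 2 = -(|T| ^ σ) := by
    rw [hAy]
    simp only [ContinuousLinearMap.pi_apply, hy0, hy1, Matrix.cons_val_two, Matrix.tail_cons,
      Matrix.head_cons]
    have harg1 : t * f c - t * f c = (0:ℝ) := by ring
    have harg2 : t * f c - t * g c = T := by rw [hT]; ring
    rw [harg1, harg2, hdT, hd0]
    simp [pr3, he]
  have hnormxy : ‖x - y‖ = |T| := by
    apply le_antisymm
    · rw [pi_norm_le_iff_of_nonneg (abs_nonneg T)]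
      intro i
      fin_cases i
      · show ‖x 0 - y 0‖ ≤ |T|
        rw [hx0, hy0, Real.norm_eq_abs,
          show t * g c - t * f c = -T by rw [hT]; ring, abs_neg]
      · show ‖x 1 - y 1‖ ≤ |T|
        rw [hx1, hy1, sub_self, norm_zero]
        exact abs_nonneg T
      · show ‖x 2 - y 2‖ ≤ |T|
        have : x 2 - y 2 = 0 := by simp [hx, hy]
        rw [this, norm_zero]
        exact abs_nonneg T
    · have h5 := norm_le_pi_norm (x - y) 0
      simp only [Pi.sub_apply, hx0, hy0, Real.norm_eq_abs] at h5
      rwa [show t * g c - t * f c = -T by rw [hT]; ring, abs_neg] at h5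
  have hne : ‖e‖ ≤ 1 := by
    rw [pi_norm_le_iff_of_nonneg zero_le_one]
    intro i
    fin_cases i <;> simp [he]
  have key : 2 * |T| ^ σ ≤ ‖A - B‖ := by
    have h1 : |((A - B) e) 2| ≤ ‖(A - B) e‖ := by
      have h6 := norm_le_pi_norm ((A - B) e) 2
      simpa [Real.norm_eq_abs] using h6
    have h2 : ‖(A - B) e‖ ≤ ‖A - B‖ := by
      calc ‖(A - B) e‖ ≤ ‖A - B‖ * ‖e‖ := (A - B).le_opNorm e
        _ ≤ ‖A - B‖ * 1 := mul_le_mul_of_nonneg_left hne (norm_nonneg _)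
        _ = ‖A - B‖ := mul_one _
    have h3 : ((A - B) e) 2 = 2 * |T| ^ σ := by
      simp only [ContinuousLinearMap.sub_apply, Pi.sub_apply, hAe, hBe]
      ring
    calc 2 * |T| ^ σ = |((A - B) e) 2| := by
          rw [h3]
          exact (abs_of_nonneg (by positivity)).symm
      _ ≤ ‖(A - B) e‖ := h1
      _ ≤ ‖A - B‖ := h2
  have hKbd := hK x y hxy
  rw [hnormxy] at hKbd
  have hpow : 0 < |T| ^ σ := Real.rpow_pos_of_pos hTabs σ
  have hfin : 2 * |T| ^ σ ≤ K * |T| ^ σ := le_trans key hKbd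
  exact le_of_mul_le_mul_right hfin hpow
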